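/- arXiv:0904.2061 — 6 statements merged into one kernel-verified Lean document; each statement's English description precedes it below -/
import Mathlib

section
/- Every reasonable partition that is a strong Nash equilibrium (SNE) is an FNE(III). -/
open Finset

/-- Total size of the items in a bin. -/
def binSize {n : ℕ} (a : Fin n → ℕ) (B : Finset (Fin n)) : ℕ := ∑ j ∈ B, a j

/-- The social welfare of a partition: the number of covered bins. -/
def welfare {n : ℕ} (a : Fin n → ℕ) (b : ℕ)
    (π : Finpartition (univ : Finset (Fin n))) : ℕ :=
  (π.parts.filter fun B => b ≤ binSize a B).card

/-- The payoff of item `j` when it lies in bin `B`. -/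
def payoffIn {n : ℕ} (a : Fin n → ℕ) (b : ℕ) (j : Fin n) (B : Finset (Fin n)) : ℚ :=
  if b ≤ binSize a B then (a j : ℚ) / (binSize a B : ℚ) else 0

/-- Nash equilibrium. -/
def IsNE {n : ℕ} (a : Fin n → ℕ) (b : ℕ)
    (π : Finpartition (univ : Finset (Fin n))) : Prop :=
  (∀ j : Fin n, ∀ B ∈ π.parts, j ∉ B →
      payoffIn a b j (insert j B) ≤ payoffIn a b j (π.part j)) ∧
  ∀ j : Fin n, payoffIn a b j {j} ≤ payoffIn a b j (π.part j)

/-- A partition is reasonable if at most one bin is uncovered. -/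
def Reasonable {n : ℕ} (a : Fin n → ℕ) (b : ℕ)
    (π : Finpartition (univ : Finset (Fin n))) : Prop :=
  (π.parts.filter fun B => binSize a B < b).card ≤ 1

/-- A bin is minimal covered if it is covered and removing any member uncovers it. -/
def MinimalCovered {n : ℕ} (a : Fin n → ℕ) (b : ℕ) (B : Finset (Fin n)) : Prop :=
  b ≤ binSize a B ∧ ∀ j ∈ B, binSize a (B.erase j) < b

/-- A partition is rational if it is reasonable and every covered bin is minimal covered. -/
def RationalPartition {n : ℕ} (a : Fin n → ℕ) (b : ℕ)
    (π : Finpartition (univ : Finset (Fin n))) : Prop :=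
  Reasonable a b π ∧ ∀ B ∈ π.parts, b ≤ binSize a B → MinimalCovered a b B

/-- `B_m(π)`: the unique uncovered bin of a (rational) partition if one exists, `∅` otherwise. -/
def uncoveredBin {n : ℕ} (a : Fin n → ℕ) (b : ℕ)
    (π : Finpartition (univ : Finset (Fin n))) : Finset (Fin n) :=
  (π.parts.filter fun B => binSize a B < b).sup id

/-- `δ(B) = s(B)` if `B` is covered, `+∞` otherwise. -/
def delta {n : ℕ} (a : Fin n → ℕ) (b : ℕ) (B : Finset (Fin n)) : ℕ∞ :=
  if b ≤ binSize a B then (binSize a B : ℕ∞) else ⊤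

/-- Fireable Nash equilibrium of type (I). -/
def IsFNE1 {n : ℕ} (a : Fin n → ℕ) (b : ℕ)
    (π : Finpartition (univ : Finset (Fin n))) : Prop :=
  RationalPartition a b π ∧
  ¬ ∃ j : Fin n, b ≤ binSize a (π.part j) ∧
      MinimalCovered a b (insert j (uncoveredBin a b π)) ∧
      binSize a (uncoveredBin a b π) + a j < binSize a (π.part j)

/-- Fireable Nash equilibrium of type (II). -/
def IsFNE2 {n : ℕ} (a : Fin n → ℕ) (b : ℕ)
    (π : Finpartition (univ : Finset (Fin n))) : Prop :=
  RationalPartition a b π ∧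
  ¬ ∃ (j : Fin n) (E : Finset (Fin n)), b ≤ binSize a (π.part j) ∧
      E ⊆ uncoveredBin a b π ∧
      MinimalCovered a b (insert j (uncoveredBin a b π \ E)) ∧
      binSize a (uncoveredBin a b π \ E) + a j < binSize a (π.part j)

/-- Fireable Nash equilibrium of type (III). -/
def IsFNE3 {n : ℕ} (a : Fin n → ℕ) (b : ℕ)
    (π : Finpartition (univ : Finset (Fin n))) : Prop :=
  RationalPartition a b π ∧
  ¬ ∃ (j : Fin n) (Bi E : Finset (Fin n)), Bi ∈ π.parts ∧ j ∉ Bi ∧ E ⊆ Bi ∧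
      MinimalCovered a b (insert j (Bi \ E)) ∧
      ((binSize a (Bi \ E) + a j : ℕ) : ℕ∞) < min (delta a b Bi) (delta a b (π.part j))

/-- Modified strong Nash equilibrium. -/
def IsMSNE {n : ℕ} (a : Fin n → ℕ) (b : ℕ)
    (π : Finpartition (univ : Finset (Fin n))) : Prop :=
  RationalPartition a b π ∧
  ¬ ∃ (Bi E : Finset (Fin n)), Bi ∈ π.parts ∧ b ≤ binSize a Bi ∧ E ⊆ Bi ∧
      binSize a (uncoveredBin a b π) < binSize a (Bi \ E) ∧
      MinimalCovered a b (uncoveredBin a b π ∪ E)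

/-- Strong Nash equilibrium. -/
def IsSNE {n : ℕ} (a : Fin n → ℕ) (b : ℕ)
    (π : Finpartition (univ : Finset (Fin n))) : Prop :=
  ¬ ∃ B : Finset (Fin n), b ≤ binSize a B ∧
      ∀ j ∈ B, binSize a (π.part j) < b ∨ binSize a B < binSize a (π.part j)

/-- `F` is a minimum subset w.r.t. `(E, b)`. -/
def IsMinSubset {n : ℕ} (a : Fin n → ℕ) (b : ℕ) (F E : Finset (Fin n)) : Prop :=
  F ⊆ E ∧ b ≤ binSize a F ∧ ∀ G ⊆ E, b ≤ binSize a G → binSize a F ≤ binSize a G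

/-- every reasonable SNE is an FNE(III). -/
theorem stmt13 (n : ℕ) (hn : 1 ≤ n) (a : Fin n → ℕ) (b : ℕ)
    (ha : ∀ j, 0 < a j) (hab : ∀ j, a j < b)
    (π : Finpartition (univ : Finset (Fin n)))
    (hres : Reasonable a b π) (hsne : IsSNE a b π) :
    IsFNE3 a b π := by
  have hrat : RationalPartition a b π := by
    refine ⟨hres, fun B hB hcov => ⟨hcov, fun j hj => ?_⟩⟩
    by_contra h
    push_neg at h
    apply hsne
    refine ⟨B.erase j, h, fun k hk => ?_⟩
    have hkB : k ∈ B := mem_of_mem_erase hk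
    have hpk : π.part k = B := π.part_eq_of_mem hB hkB
    right
    rw [hpk]
    have : binSize a (B.erase j) + a j = binSize a B := by
      unfold binSize
      rw [Finset.sum_erase_add _ _ hj]
    have := ha j
    omega
  refine ⟨hrat, ?_⟩
  rintro ⟨j, Bi, E, hBi, hjBi, hE, ⟨hmc, _⟩, hlt⟩
  have hjnot : j ∉ Bi \ E := fun h => hjBi (mem_sdiff.mp h).1
  have hsum : binSize a (insert j (Bi \ E)) = binSize a (Bi \ E) + a j := by
    unfold binSize
    rw [Finset.sum_insert hjnot, Nat.add_comm]
  rw [lt_min_iff] at hlt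
  obtain ⟨h1, h2⟩ := hlt
  apply hsne
  refine ⟨insert j (Bi \ E), hmc, fun k hk => ?_⟩
  rcases Finset.mem_insert.mp hk with rfl | hkBi
  · unfold delta at h2
    split_ifs at h2 with hc
    · right; rw [hsum]; exact_mod_cast h2
    · left; omega
  · have hpk : π.part k = Bi := π.part_eq_of_mem hBi (mem_sdiff.mp hkBi).1
    rw [hpk]
    unfold delta at h1
    split_ifs at h1 with hc
    · right; rw [hsum]; exact_mod_cast h1
    · left; omega
end

section
/- Every reasonable partition that is a strong Nash equilibrium (SNE) is an M-SNE. -/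
open Finset

/-- every reasonable SNE is an M-SNE. -/
theorem stmt14 (n : ℕ) (hn : 1 ≤ n) (a : Fin n → ℕ) (b : ℕ)
    (ha : ∀ j, 0 < a j) (hab : ∀ j, a j < b)
    (π : Finpartition (univ : Finset (Fin n)))
    (hres : Reasonable a b π) (hsne : IsSNE a b π) :
    IsMSNE a b π := by
  have hb : 0 < b := lt_trans (ha ⟨0, hn⟩) (hab ⟨0, hn⟩)
  -- rationality
  have hrat : RationalPartition a b π := by
    refine ⟨hres, fun B hB hcov => ⟨hcov, fun j hj => ?_⟩⟩
    by_contra hcon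
    push_neg at hcon
    apply hsne
    refine ⟨B.erase j, hcon, fun k hk => ?_⟩
    have hkB : k ∈ B := mem_of_mem_erase hk
    have hpart : π.part k = B := π.part_eq_of_mem hB hkB
    right
    rw [hpart]
    have : binSize a (B.erase j) + a j = binSize a B := by
      unfold binSize
      rw [Finset.sum_erase_add _ _ hj]
    have := ha j
    omega
  refine ⟨hrat, ?_⟩
  rintro ⟨Bi, E, hBi, hcovBi, hE, hlt, hmc⟩
  set U := uncoveredBin a b π with hU
  -- key facts about U
  have hUfacts : U = ∅ ∨ (U ∈ π.parts ∧ binSize a U < b) := by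
    unfold Reasonable at hres
    rcases Finset.eq_empty_or_nonempty
        (π.parts.filter fun B => binSize a B < b) with h | ⟨B0, hB0⟩
    · left; rw [hU]; unfold uncoveredBin; rw [h]; rfl
    · right
      have : (π.parts.filter fun B => binSize a B < b) = {B0} := by
        apply Finset.eq_singleton_iff_unique_mem.mpr
        refine ⟨hB0, fun x hx => Finset.card_le_one.mp hres x hx B0 hB0⟩
      have hUeq : U = B0 := by
        rw [hU]; unfold uncoveredBin; rw [this]; simp
      rw [hUeq]
      have := Finset.mem_filter.mp hB0
      exact ⟨this.1, this.2⟩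
  have hdisj : Disjoint U E := by
    rcases hUfacts with h | ⟨hUp, hUlt⟩
    · rw [h]; exact disjoint_bot_left
    · have hne : U ≠ Bi := by
        intro h; rw [h] at hUlt; omega
      exact Finset.disjoint_of_subset_right hE
        (π.disjoint hUp hBi hne)
  have hsum : binSize a (U ∪ E) = binSize a U + binSize a E := by
    unfold binSize; rw [Finset.sum_union hdisj]
  have hBisum : binSize a (Bi \ E) + binSize a E = binSize a Bi := by
    unfold binSize; rw [Finset.sum_sdiff hE]
  have hltBi : binSize a (U ∪ E) < binSize a Bi := by omega
  apply hsne
  refine ⟨U ∪ E, hmc.1, fun k hk => ?_⟩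
  rcases Finset.mem_union.mp hk with hkU | hkE
  · rcases hUfacts with h | ⟨hUp, hUlt⟩
    · rw [h] at hkU; exact absurd hkU (Finset.notMem_empty k)
    · left; rw [π.part_eq_of_mem hUp hkU]; exact hUlt
  · right; rw [π.part_eq_of_mem hBi (hE hkE)]; exact hltBi
end

section
/- For every integer n ≥ 2, consider the instance of selfish bin covering with bin volume b = 2n, 2n items of size 2n−1, and 2n items of size 2. Every reasonable strong Nash equilibrium (SNE) π of this instance satisfies p(π) = n+2, while OPT = 2n. Consequently, both the price of anarchy and the price of stability with respect to SNE are at most 1/2. -/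
open Finset

/-! ### Auxiliary material for `stmt15` -/

/-- The size function of the statement-15 instance. -/
private def A (n : ℕ) : Fin (4*n) → ℕ := fun j => if (j:ℕ) < 2*n then 2*n-1 else 2

private lemma aux_k0 (n k m : ℕ) (hn : 2 ≤ n) (h : (2*n-1)*k + 2*m = 2*n) :
    k = 0 ∧ m = n := by
  have hk : k ≤ 1 := by
    by_contra hk
    push_neg at hk
    have h2 : (2*n-1)*2 ≤ (2*n-1)*k := Nat.mul_le_mul le_rfl hk
    generalize (2*n-1)*k = t at h h2
    omega
  interval_cases k <;> omega

private lemma aux_k2 (n k : ℕ) (hn : 2 ≤ n) (h1 : 2*n ≤ (2*n-1)*k)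
    (h2 : (2*n-1)*k ≤ 2*(2*n-1)) : k = 2 := by
  have hk : k ≤ 2 := by
    by_contra hk
    push_neg at hk
    have h3 : (2*n-1)*3 ≤ (2*n-1)*k := Nat.mul_le_mul le_rfl hk
    generalize (2*n-1)*k = t at h1 h2 h3
    omega
  interval_cases k <;> omega

private lemma binSize_decomp (n : ℕ) (B : Finset (Fin (4*n))) :
    binSize (A n) B
      = (2*n-1) * #(B.filter fun j : Fin (4*n) => (j:ℕ) < 2*n)
        + 2 * #(B.filter fun j : Fin (4*n) => ¬ (j:ℕ) < 2*n) := by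
  unfold binSize A
  rw [← Finset.sum_filter_add_sum_filter_not B (fun j => (j:ℕ) < 2*n)]
  congr 1
  · rw [Finset.sum_congr rfl fun x hx => if_pos (Finset.mem_filter.1 hx).2,
      Finset.sum_const, smul_eq_mul, mul_comm]
  · rw [Finset.sum_congr rfl fun x hx => if_neg (Finset.mem_filter.1 hx).2,
      Finset.sum_const, smul_eq_mul, mul_comm]

private lemma binSize_small (n : ℕ) (B : Finset (Fin (4*n)))
    (hB : ∀ j ∈ B, ¬ (j:ℕ) < 2*n) : binSize (A n) B = 2 * #B := by
  rw [binSize_decomp n B, Finset.filter_true_of_mem hB,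
    Finset.filter_false_of_mem (fun j hj h => hB j hj h), Finset.card_empty]
  omega

private lemma binSize_big (n : ℕ) (B : Finset (Fin (4*n)))
    (hB : ∀ j ∈ B, (j:ℕ) < 2*n) : binSize (A n) B = (2*n-1) * #B := by
  rw [binSize_decomp n B, Finset.filter_true_of_mem hB,
    Finset.filter_false_of_mem (fun j hj h => h (hB j hj)), Finset.card_empty]
  omega

private lemma card_filter_big (n : ℕ) :
    #(univ.filter fun j : Fin (4*n) => (j:ℕ) < 2*n) = 2*n := by
  have h : (univ.filter fun j : Fin (4*n) => (j:ℕ) < 2*n)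
      = (univ : Finset (Fin (2*n))).map (Fin.castLEEmb (by omega)) := by
    ext x
    simp only [mem_filter, mem_univ, true_and, Finset.mem_map, Fin.castLEEmb, Fin.castLE,
      Function.Embedding.coeFn_mk]
    constructor
    · intro hx; exact ⟨⟨x, hx⟩, rfl⟩
    · rintro ⟨y, rfl⟩; exact y.2
  rw [h, Finset.card_map, Finset.card_univ, Fintype.card_fin]

private lemma card_filter_small (n : ℕ) :
    #(univ.filter fun j : Fin (4*n) => ¬ (j:ℕ) < 2*n) = 2*n := by
  have h := Finset.card_filter_add_card_filter_not
    (s := (univ : Finset (Fin (4*n)))) (p := fun j : Fin (4*n) => (j:ℕ) < 2*n)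
  rw [card_filter_big n, Finset.card_univ, Fintype.card_fin] at h
  omega

private lemma exact2n (n : ℕ) (hn : 2 ≤ n) (B : Finset (Fin (4*n)))
    (h : binSize (A n) B = 2*n) : (∀ j ∈ B, ¬ (j:ℕ) < 2*n) ∧ #B = n := by
  rw [binSize_decomp n B] at h
  obtain ⟨hk, hm⟩ := aux_k0 n _ _ hn h
  rw [Finset.card_eq_zero] at hk
  have hmem : ∀ j ∈ B, ¬ (j:ℕ) < 2*n := by
    intro j hj hjb
    have : j ∈ B.filter fun j : Fin (4*n) => (j:ℕ) < 2*n := Finset.mem_filter.2 ⟨hj, hjb⟩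
    rw [hk] at this
    exact absurd this (Finset.notMem_empty j)
  refine ⟨hmem, ?_⟩
  rw [Finset.filter_true_of_mem hmem] at hm
  exact hm

/-- Part 1 of statement 15: every SNE has welfare `n + 2`. -/
private lemma stmt15_sne (n : ℕ) (hn : 2 ≤ n)
    (π : Finpartition (univ : Finset (Fin (4 * n))))
    (hsne : IsSNE (A n) (2 * n) π) :
    welfare (A n) (2 * n) π = n + 2 := by
  classical
  unfold IsSNE at hsne
  push_neg at hsne
  -- hsne : ∀ B, 2*n ≤ binSize (A n) B →
  --   ∃ j ∈ B, 2*n ≤ binSize (A n) (π.part j) ∧ binSize (A n) (π.part j) ≤ binSize (A n) B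
  set Small := univ.filter fun j : Fin (4*n) => ¬ (j:ℕ) < 2*n with hSmalldef
  set Big := univ.filter fun j : Fin (4*n) => (j:ℕ) < 2*n with hBigdef
  -- Step 1: few small items in "bad" bins
  have hS : #(Small.filter fun j => binSize (A n) (π.part j) ≠ 2*n) < n := by
    by_contra h
    push_neg at h
    obtain ⟨D, hD, hDcard⟩ := Finset.exists_subset_card_eq h
    have hDsmall : ∀ j ∈ D, ¬ (j:ℕ) < 2*n := fun j hj =>
      (Finset.mem_filter.1 (Finset.filter_subset _ _ (hD hj))).2
    have hDsize : binSize (A n) D = 2*n := by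
      rw [binSize_small n D hDsmall, hDcard]
    obtain ⟨j, hjD, hj1, hj2⟩ := hsne D (le_of_eq hDsize.symm)
    rw [hDsize] at hj2
    exact (Finset.mem_filter.1 (hD hjD)).2 (le_antisymm hj2 hj1)
  -- Step 2: the family Q of exactly-2n bins
  set Q := π.parts.filter (fun B => binSize (A n) B = 2*n) with hQdef
  have hQmem : ∀ B ∈ Q, (∀ j ∈ B, ¬ (j:ℕ) < 2*n) ∧ #B = n := fun B hB =>
    exact2n n hn B (Finset.mem_filter.1 hB).2
  have hQdisj : (Q : Set (Finset (Fin (4*n)))).PairwiseDisjoint id :=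
    π.supIndep.pairwiseDisjoint.subset (by
      intro B hB; exact Finset.filter_subset _ _ hB)
  have hQunion_card : #(Q.biUnion id) = n * #Q := by
    rw [Finset.card_biUnion (fun x hx y hy hxy => hQdisj hx hy hxy)]
    simp only [id_eq]
    rw [Finset.sum_congr rfl fun B hB => (hQmem B hB).2, Finset.sum_const, smul_eq_mul, mul_comm]
  have hQsub : Q.biUnion id ⊆ Small := by
    intro j hj
    obtain ⟨B, hB, hjB⟩ := Finset.mem_biUnion.1 hj
    exact Finset.mem_filter.2 ⟨Finset.mem_univ _, (hQmem B hB).1 j hjB⟩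
  have hsub2 : Small \ (Small.filter fun j => binSize (A n) (π.part j) ≠ 2*n)
      ⊆ Q.biUnion id := by
    intro j hj
    obtain ⟨hjS, hjn⟩ := Finset.mem_sdiff.1 hj
    have hval : binSize (A n) (π.part j) = 2*n := by
      by_contra hv
      exact hjn (Finset.mem_filter.2 ⟨hjS, hv⟩)
    refine Finset.mem_biUnion.2 ⟨π.part j, ?_, π.mem_part (Finset.mem_univ j)⟩
    exact Finset.mem_filter.2 ⟨π.part_mem.2 (Finset.mem_univ j), hval⟩
  have hSmallcard : #Small = 2*n := card_filter_small n
  have hQcard : #Q = 2 := by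
    have h1 : 2*n - n < #(Small \ (Small.filter fun j => binSize (A n) (π.part j) ≠ 2*n)) := by
      rw [Finset.card_sdiff_of_subset (Finset.filter_subset _ _), hSmallcard]
      omega
    have h2 : n + 1 ≤ n * #Q := by
      have := (Finset.card_le_card hsub2).trans (le_of_eq hQunion_card)
      omega
    have h3 : n * #Q ≤ 2*n := by
      have := Finset.card_le_card hQsub
      rw [hQunion_card, hSmallcard] at this
      exact this
    have hq2 : #Q ≤ 2 := by
      by_contra hq
      push_neg at hq
      have : n*3 ≤ n * #Q := Nat.mul_le_mul le_rfl hq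
      generalize n * #Q = t at h2 h3 this
      omega
    generalize hgen : #Q = q at h2 hq2 ⊢
    interval_cases q <;> omega
  have hQall : Q.biUnion id = Small :=
    Finset.eq_of_subset_of_card_le hQsub (by rw [hQunion_card, hQcard, hSmallcard]; omega)
  have hsmall_part : ∀ j : Fin (4*n), ¬ (j:ℕ) < 2*n → π.part j ∈ Q := by
    intro j hj
    have hjm : j ∈ Q.biUnion id := by
      rw [hQall]; exact Finset.mem_filter.2 ⟨Finset.mem_univ _, hj⟩
    obtain ⟨B, hBQ, hjB⟩ := Finset.mem_biUnion.1 hjm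
    rwa [π.part_eq_of_mem (Finset.mem_filter.1 hBQ).1 hjB]
  have hpure : ∀ B ∈ π.parts, B ∉ Q → ∀ j ∈ B, (j:ℕ) < 2*n := by
    intro B hB hBQ j hjB
    by_contra hj
    have h := hsmall_part j hj
    rw [π.part_eq_of_mem hB hjB] at h
    exact hBQ h
  -- Step 3: big items
  have hbig_part_pure : ∀ j : Fin (4*n), (j:ℕ) < 2*n → ∀ i ∈ π.part j, (i:ℕ) < 2*n := by
    intro j hj
    refine hpure _ (π.part_mem.2 (Finset.mem_univ j)) ?_
    intro hQ'
    exact absurd hj ((hQmem _ hQ').1 j (π.mem_part (Finset.mem_univ j)))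
  have hT : #(Big.filter fun j => binSize (A n) (π.part j) ≠ 2*(2*n-1)) ≤ 1 := by
    rw [Finset.card_le_one]
    intro x hx y hy
    by_contra hxy
    obtain ⟨hxB, hxv⟩ := Finset.mem_filter.1 hx
    obtain ⟨hyB, hyv⟩ := Finset.mem_filter.1 hy
    have hxbig : (x:ℕ) < 2*n := (Finset.mem_filter.1 hxB).2
    have hybig : (y:ℕ) < 2*n := (Finset.mem_filter.1 hyB).2
    have hpair : ∀ j ∈ ({x, y} : Finset (Fin (4*n))), (j:ℕ) < 2*n := by
      intro j hj
      rcases Finset.mem_insert.1 hj with rfl | hj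
      · exact hxbig
      · rw [Finset.mem_singleton.1 hj]; exact hybig
    have hsize : binSize (A n) {x, y} = 2*(2*n-1) := by
      rw [binSize_big n _ hpair, Finset.card_pair hxy, mul_comm]
    obtain ⟨j, hjmem, hj1, hj2⟩ := hsne {x, y} (by rw [hsize]; omega)
    rw [hsize] at hj2
    have hjbig : (j:ℕ) < 2*n := hpair j hjmem
    have hsizej : binSize (A n) (π.part j) = (2*n-1) * #(π.part j) :=
      binSize_big n _ (hbig_part_pure j hjbig)
    have hk := aux_k2 n #(π.part j) hn (hsizej ▸ hj1) (hsizej ▸ hj2)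
    have hval : binSize (A n) (π.part j) = 2*(2*n-1) := by rw [hsizej, hk, mul_comm]
    rcases Finset.mem_insert.1 hjmem with rfl | hj
    · exact hxv hval
    · rw [Finset.mem_singleton.1 hj] at hval
      exact hyv hval
  -- Step 4: the family R of size 2*(2n-1) bins
  set R := π.parts.filter (fun B => binSize (A n) B = 2*(2*n-1)) with hRdef
  have hQR : ∀ B ∈ R, B ∉ Q := by
    intro B hBR hBQ
    have h1 := (Finset.mem_filter.1 hBR).2
    have h2 := (Finset.mem_filter.1 hBQ).2
    omega
  have hRmem : ∀ B ∈ R, (∀ j ∈ B, (j:ℕ) < 2*n) ∧ #B = 2 := by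
    intro B hBR
    have hpB : ∀ j ∈ B, (j:ℕ) < 2*n :=
      hpure B (Finset.filter_subset _ _ hBR) (hQR B hBR)
    refine ⟨hpB, ?_⟩
    have hv := (Finset.mem_filter.1 hBR).2
    rw [binSize_big n B hpB] at hv
    have h2n1 : 0 < 2*n-1 := by omega
    exact Nat.eq_of_mul_eq_mul_left h2n1 (by rw [hv, mul_comm])
  have hRdisj : (R : Set (Finset (Fin (4*n)))).PairwiseDisjoint id :=
    π.supIndep.pairwiseDisjoint.subset (by
      intro B hB; exact Finset.filter_subset _ _ hB)
  have hRunion_card : #(R.biUnion id) = 2 * #R := by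
    rw [Finset.card_biUnion (fun x hx y hy hxy => hRdisj hx hy hxy)]
    simp only [id_eq]
    rw [Finset.sum_congr rfl fun B hB => (hRmem B hB).2, Finset.sum_const, smul_eq_mul, mul_comm]
  have hRsub : R.biUnion id ⊆ Big := by
    intro j hj
    obtain ⟨B, hB, hjB⟩ := Finset.mem_biUnion.1 hj
    exact Finset.mem_filter.2 ⟨Finset.mem_univ _, (hRmem B hB).1 j hjB⟩
  have hsub3 : Big \ (Big.filter fun j => binSize (A n) (π.part j) ≠ 2*(2*n-1))
      ⊆ R.biUnion id := by
    intro j hj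
    obtain ⟨hjS, hjn⟩ := Finset.mem_sdiff.1 hj
    have hval : binSize (A n) (π.part j) = 2*(2*n-1) := by
      by_contra hv
      exact hjn (Finset.mem_filter.2 ⟨hjS, hv⟩)
    refine Finset.mem_biUnion.2 ⟨π.part j, ?_, π.mem_part (Finset.mem_univ j)⟩
    exact Finset.mem_filter.2 ⟨π.part_mem.2 (Finset.mem_univ j), hval⟩
  have hBigcard : #Big = 2*n := card_filter_big n
  have hRcard : #R = n := by
    have h1 : 2*n - 1 ≤ #(Big \ (Big.filter fun j => binSize (A n) (π.part j) ≠ 2*(2*n-1))) := by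
      rw [Finset.card_sdiff_of_subset (Finset.filter_subset _ _), hBigcard]
      omega
    have h2 : 2*n - 1 ≤ 2 * #R := by
      have := (Finset.card_le_card hsub3).trans (le_of_eq hRunion_card)
      omega
    have h3 : 2 * #R ≤ 2*n := by
      have := Finset.card_le_card hRsub
      rw [hRunion_card, hBigcard] at this
      exact this
    omega
  have hRall : R.biUnion id = Big :=
    Finset.eq_of_subset_of_card_le hRsub (by rw [hRunion_card, hRcard, hBigcard])
  have hbig_part : ∀ j : Fin (4*n), (j:ℕ) < 2*n → π.part j ∈ R := by
    intro j hj
    have hjm : j ∈ R.biUnion id := by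
      rw [hRall]; exact Finset.mem_filter.2 ⟨Finset.mem_univ _, hj⟩
    obtain ⟨B, hBR, hjB⟩ := Finset.mem_biUnion.1 hjm
    rwa [π.part_eq_of_mem (Finset.mem_filter.1 hBR).1 hjB]
  -- Step 5: the parts are exactly Q ∪ R
  have hpartsQR : π.parts = Q ∪ R := by
    apply Finset.Subset.antisymm
    · intro B hB
      obtain ⟨j, hj⟩ := π.nonempty_of_mem_parts hB
      by_cases hjb : (j:ℕ) < 2*n
      · have h := hbig_part j hjb
        rw [π.part_eq_of_mem hB hj] at h
        exact Finset.mem_union_right _ h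
      · have h := hsmall_part j hjb
        rw [π.part_eq_of_mem hB hj] at h
        exact Finset.mem_union_left _ h
    · exact Finset.union_subset (Finset.filter_subset _ _) (Finset.filter_subset _ _)
  have hQRdisj : Disjoint Q R :=
    Finset.disjoint_left.2 fun B hBQ hBR => hQR B hBR hBQ
  unfold welfare
  rw [hpartsQR, Finset.filter_true_of_mem, Finset.card_union_of_disjoint hQRdisj, hQcard, hRcard]
  · omega
  · intro B hB
    rcases Finset.mem_union.1 hB with h | h
    · rw [(Finset.mem_filter.1 h).2]
    · rw [(Finset.mem_filter.1 h).2]; omega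

/-- Part 2 of statement 15: the welfare is always at most `2 * n`. -/
private lemma stmt15_opt_le (n : ℕ) (hn : 2 ≤ n)
    (σ : Finpartition (univ : Finset (Fin (4 * n)))) :
    welfare (A n) (2 * n) σ ≤ 2 * n := by
  classical
  by_contra hcon
  push_neg at hcon
  unfold welfare at hcon
  set C := σ.parts.filter (fun B => 2*n ≤ binSize (A n) B) with hCdef
  set E := C.filter (fun B => binSize (A n) B = 2*n) with hEdef
  have hEparts : E ⊆ σ.parts := (Finset.filter_subset _ _).trans (Finset.filter_subset _ _)
  have hEmem : ∀ B ∈ E, #B = n := fun B hB =>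
    (exact2n n hn B (Finset.mem_filter.1 hB).2).2
  have hEdisj : (E : Set (Finset (Fin (4*n)))).PairwiseDisjoint id :=
    σ.supIndep.pairwiseDisjoint.subset (by intro B hB; exact hEparts hB)
  have hEcard : #E ≤ 4 := by
    have h1 : #(E.biUnion id) = n * #E := by
      rw [Finset.card_biUnion (fun x hx y hy hxy => hEdisj hx hy hxy)]
      simp only [id_eq]
      rw [Finset.sum_congr rfl fun B hB => hEmem B hB, Finset.sum_const, smul_eq_mul, mul_comm]
    have h2 : #(E.biUnion id) ≤ 4*n := by
      have := Finset.card_le_card (Finset.subset_univ (E.biUnion id))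
      rwa [Finset.card_univ, Fintype.card_fin] at this
    rw [h1] at h2
    by_contra hE4
    push_neg at hE4
    have : n*5 ≤ n * #E := Nat.mul_le_mul le_rfl hE4
    generalize n * #E = t at h2 this
    omega
  -- total size of all bins
  have htotal : ∑ B ∈ σ.parts, binSize (A n) B = 4*n*n + 2*n := by
    have hsum : ∑ B ∈ σ.parts, binSize (A n) B = binSize (A n) univ := by
      unfold binSize
      have h := Finset.sum_biUnion (s := σ.parts) (t := id) (f := A n)
        σ.supIndep.pairwiseDisjoint
      rw [σ.biUnion_parts] at h
      exact h.symm
    rw [hsum, binSize_decomp n univ, card_filter_big n, card_filter_small n]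
    have h1 : 1 ≤ 2*n := by omega
    cases' Nat.exists_eq_add_of_le h1 with m hm
    nlinarith [Nat.sub_add_cancel h1]
  have hsum_le : ∑ B ∈ C, binSize (A n) B ≤ 4*n*n + 2*n := by
    rw [← htotal]
    exact Finset.sum_le_sum_of_subset (Finset.filter_subset _ _)
  have hsplit : ∑ B ∈ E, binSize (A n) B
      + ∑ B ∈ C.filter (fun B => ¬ binSize (A n) B = 2*n), binSize (A n) B
      = ∑ B ∈ C, binSize (A n) B :=
    Finset.sum_filter_add_sum_filter_not C _ _
  have hEsum : ∑ B ∈ E, binSize (A n) B = 2*n * #E := by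
    rw [Finset.sum_congr rfl fun B hB => (Finset.mem_filter.1 hB).2, Finset.sum_const,
      smul_eq_mul, mul_comm]
  have hrest : (2*n+1) * #(C.filter (fun B => ¬ binSize (A n) B = 2*n))
      ≤ ∑ B ∈ C.filter (fun B => ¬ binSize (A n) B = 2*n), binSize (A n) B := by
    rw [mul_comm, ← smul_eq_mul]
    refine Finset.card_nsmul_le_sum _ _ _ ?_
    intro B hB
    obtain ⟨hBC, hBne⟩ := Finset.mem_filter.1 hB
    have := (Finset.mem_filter.1 hBC).2
    omega
  have hcards : #E + #(C.filter (fun B => ¬ binSize (A n) B = 2*n)) = #C :=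
    Finset.card_filter_add_card_filter_not _
  set e := #E
  set r := #(C.filter (fun B => ¬ binSize (A n) B = 2*n))
  have hC1 : 2*n + 1 ≤ #C := hcon
  have hkey : 2*n*e + (2*n+1)*r ≤ 4*n*n + 2*n := by
    calc 2*n*e + (2*n+1)*r ≤ ∑ B ∈ E, binSize (A n) B
        + ∑ B ∈ C.filter (fun B => ¬ binSize (A n) B = 2*n), binSize (A n) B := by
          rw [hEsum]; omega
      _ = ∑ B ∈ C, binSize (A n) B := hsplit
      _ ≤ 4*n*n + 2*n := hsum_le
  nlinarith [hkey, hcards, hC1, hEcard, hn]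

/-- Part 3 of statement 15: a partition with welfare `2 * n` exists. -/
private lemma stmt15_opt_ex (n : ℕ) (hn : 2 ≤ n) :
    ∃ σ : Finpartition (univ : Finset (Fin (4 * n))),
      welfare (A n) (2 * n) σ = 2 * n := by
  classical
  have h2n : 0 < 2*n := by omega
  let s : Setoid (Fin (4*n)) :=
    ⟨fun x y => (x:ℕ) % (2*n) = (y:ℕ) % (2*n), ⟨fun _ => rfl, Eq.symm, Eq.trans⟩⟩
  haveI : DecidableRel s.r := fun x y => Nat.decEq _ _
  refine ⟨Finpartition.ofSetoid s, ?_⟩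
  set σ := Finpartition.ofSetoid s with hσ
  have hpart : ∀ j : Fin (4*n), ∃ x y : Fin (4*n), x ≠ y ∧ (x:ℕ) < 2*n ∧ ¬ (y:ℕ) < 2*n ∧
      σ.part j = {x, y} := by
    intro j
    have hj4 : (j:ℕ) % (2*n) < 2*n := Nat.mod_lt _ h2n
    refine ⟨⟨(j:ℕ) % (2*n), by omega⟩, ⟨(j:ℕ) % (2*n) + 2*n, by omega⟩, ?_, by simpa using hj4,
      by simp, ?_⟩
    · intro h
      apply congrArg Fin.val at h
      simp only [] at h
      omega
    · ext x
      rw [Finpartition.mem_part_ofSetoid_iff_rel]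
      show (j:ℕ) % (2*n) = (x:ℕ) % (2*n) ↔ _
      simp only [Finset.mem_insert, Finset.mem_singleton]
      constructor
      · intro hx
        have hx4 : (x:ℕ) < 4*n := x.2
        have hcase : (x:ℕ) = (j:ℕ) % (2*n) ∨ (x:ℕ) = (j:ℕ) % (2*n) + 2*n := by
          have hxm := Nat.mod_lt (x:ℕ) h2n
          have hdvd : (x:ℕ) = 2*n * ((x:ℕ)/(2*n)) + (x:ℕ) % (2*n) := (Nat.div_add_mod _ _).symm
          have hq : (x:ℕ)/(2*n) < 2 := by
            by_contra hq
            push_neg at hq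
            have : 2*n*2 ≤ 2*n*((x:ℕ)/(2*n)) := Nat.mul_le_mul le_rfl hq
            omega
          interval_cases h : ((x:ℕ)/(2*n)) <;> omega
        rcases hcase with h | h
        · left; exact Fin.ext h
        · right; exact Fin.ext h
      · rintro (rfl | rfl) <;> simp <;> omega
  have hparts : ∀ B ∈ σ.parts, binSize (A n) B = 2*n+1 ∧ #B = 2 := by
    intro B hB
    obtain ⟨j, hj⟩ := σ.nonempty_of_mem_parts hB
    have hBj : σ.part j = B := σ.part_eq_of_mem hB hj
    obtain ⟨x, y, hxy, hx, hy, hxyB⟩ := hpart j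
    rw [← hBj, hxyB]
    constructor
    · unfold binSize A
      rw [Finset.sum_pair hxy]
      simp only [if_pos hx, if_neg hy]
      omega
    · rw [Finset.card_insert_of_notMem (by simpa using hxy), Finset.card_singleton]
  have hcard : #σ.parts = 2*n := by
    have h := σ.sum_card_parts
    rw [Finset.sum_congr rfl (fun B hB => (hparts B hB).2), Finset.sum_const, smul_eq_mul] at h
    simp only [Finset.card_univ, Fintype.card_fin] at h
    omega
  unfold welfare
  rw [Finset.filter_true_of_mem (fun B hB => by rw [(hparts B hB).1]; omega), hcard]

/-- the instance with bin volume `2n`, `2n` items of size `2n-1` and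
`2n` items of size `2`: every reasonable SNE has welfare `n+2`, while `OPT = 2n`. -/
theorem stmt15 (n : ℕ) (hn : 2 ≤ n) :
    (∀ π : Finpartition (univ : Finset (Fin (4 * n))),
        Reasonable (fun j : Fin (4 * n) => if (j : ℕ) < 2 * n then 2 * n - 1 else 2)
          (2 * n) π →
        IsSNE (fun j : Fin (4 * n) => if (j : ℕ) < 2 * n then 2 * n - 1 else 2)
          (2 * n) π →
        welfare (fun j : Fin (4 * n) => if (j : ℕ) < 2 * n then 2 * n - 1 else 2)
          (2 * n) π = n + 2) ∧
    (∀ σ : Finpartition (univ : Finset (Fin (4 * n))),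
      welfare (fun j : Fin (4 * n) => if (j : ℕ) < 2 * n then 2 * n - 1 else 2)
        (2 * n) σ ≤ 2 * n) ∧
    (∃ σ : Finpartition (univ : Finset (Fin (4 * n))),
      welfare (fun j : Fin (4 * n) => if (j : ℕ) < 2 * n then 2 * n - 1 else 2)
        (2 * n) σ = 2 * n) := by
  refine ⟨fun π _ hsne => stmt15_sne n hn π hsne, fun σ => stmt15_opt_le n hn σ,
    stmt15_opt_ex n hn⟩
end

section
/- For every rational partition π of an instance of selfish bin covering, there exists an M-SNE partition π' of the same instance with p(π') ≥ p(π). -/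
open Finset

section AuxStmt16

variable {n : ℕ} {a : Fin n → ℕ} {b : ℕ}

lemma binSize_mono {B C : Finset (Fin n)} (h : B ⊆ C) : binSize a B ≤ binSize a C :=
  Finset.sum_le_sum_of_subset h

lemma nonempty_of_binSize_pos {B : Finset (Fin n)} (h : 0 < binSize a B) : B.Nonempty := by
  by_contra h'
  rw [Finset.not_nonempty_iff_eq_empty] at h'
  simp [binSize, h'] at h

/-- Characterization of the uncovered bin of a reasonable partition. -/
lemma uncovered_spec {π : Finpartition (univ : Finset (Fin n))}
    (hπ : Reasonable a b π) :
    ((π.parts.filter fun B => binSize a B < b) = ∅ ∧ uncoveredBin a b π = ∅) ∨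
    (π.parts.filter fun B => binSize a B < b) = {uncoveredBin a b π} := by
  rcases Nat.le_one_iff_eq_zero_or_eq_one.mp hπ with h | h
  · left
    have he : (π.parts.filter fun B => binSize a B < b) = ∅ := Finset.card_eq_zero.mp h
    exact ⟨he, by simp [uncoveredBin, he]⟩
  · right
    obtain ⟨U, hU⟩ := Finset.card_eq_one.mp h
    have : uncoveredBin a b π = U := by simp [uncoveredBin, hU]
    rw [this, hU]

lemma uncovered_lt {π : Finpartition (univ : Finset (Fin n))}
    (hb : 0 < b) (hπ : Reasonable a b π) : binSize a (uncoveredBin a b π) < b := by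
  rcases uncovered_spec (a := a) (b := b) hπ with ⟨-, h⟩ | h
  · simpa [binSize, h] using hb
  · have : uncoveredBin a b π ∈ π.parts.filter fun B => binSize a B < b := by
      rw [h]; exact Finset.mem_singleton_self _
    exact (Finset.mem_filter.mp this).2

lemma uncovered_unique {π : Finpartition (univ : Finset (Fin n))}
    (hπ : Reasonable a b π) {B : Finset (Fin n)} (hB : B ∈ π.parts)
    (hBlt : binSize a B < b) : B = uncoveredBin a b π := by
  have hmem : B ∈ π.parts.filter fun B => binSize a B < b :=
    Finset.mem_filter.mpr ⟨hB, hBlt⟩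
  rcases uncovered_spec (a := a) (b := b) hπ with ⟨he, -⟩ | h
  · rw [he] at hmem; exact absurd hmem (Finset.notMem_empty _)
  · rw [h] at hmem; exact Finset.mem_singleton.mp hmem

lemma uncovered_mem_or_empty {π : Finpartition (univ : Finset (Fin n))}
    (hπ : Reasonable a b π) :
    uncoveredBin a b π = ∅ ∨ uncoveredBin a b π ∈ π.parts := by
  rcases uncovered_spec (a := a) (b := b) hπ with ⟨-, h⟩ | h
  · exact Or.inl h
  · right
    have : uncoveredBin a b π ∈ π.parts.filter fun B => binSize a B < b := by
      rw [h]; exact Finset.mem_singleton_self _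
    exact (Finset.mem_filter.mp this).1

/-- The key surgery step: if a rational partition is not an M-SNE, we can find another
rational partition with the same welfare and strictly larger uncovered bin. -/
lemma msne_step (hb : 0 < b) (π : Finpartition (univ : Finset (Fin n)))
    (hπ : RationalPartition a b π) (hne : ¬ IsMSNE a b π) :
    ∃ π'' : Finpartition (univ : Finset (Fin n)),
      RationalPartition a b π'' ∧ welfare a b π'' = welfare a b π ∧
      binSize a (uncoveredBin a b π) < binSize a (uncoveredBin a b π'') := by
  classical
  have hdev : ∃ (Bi E : Finset (Fin n)), Bi ∈ π.parts ∧ b ≤ binSize a Bi ∧ E ⊆ Bi ∧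
      binSize a (uncoveredBin a b π) < binSize a (Bi \ E) ∧
      MinimalCovered a b (uncoveredBin a b π ∪ E) := by
    by_contra h
    exact hne ⟨hπ, h⟩
  obtain ⟨Bi, E, hBi, hBicov, hEBi, hlt, hmin⟩ := hdev
  set U := uncoveredBin a b π with hUdef
  have hUlt : binSize a U < b := uncovered_lt hb hπ.1
  -- U and Bi are disjoint
  have hdisjUB : Disjoint U Bi := by
    rcases uncovered_mem_or_empty (a := a) (b := b) hπ.1 with h | h
    · rw [hUdef, h]; exact Finset.disjoint_empty_left _
    · have hne' : U ≠ Bi := by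
        intro he; rw [he] at hUlt; omega
      exact π.disjoint h hBi hne'
  -- E is nonempty
  have hEne : E.Nonempty := by
    rcases Finset.eq_empty_or_nonempty E with h | h
    · exfalso; have := hmin.1; rw [h, Finset.union_empty] at this; omega
    · exact h
  -- Bi \ E is uncovered, by minimality of Bi
  have hBiE_lt : binSize a (Bi \ E) < b := by
    obtain ⟨j, hj⟩ := hEne
    have hsub : Bi \ E ⊆ Bi.erase j := by
      intro x hx
      rw [Finset.mem_sdiff] at hx
      exact Finset.mem_erase.mpr ⟨fun he => hx.2 (he ▸ hj), hx.1⟩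
    calc binSize a (Bi \ E) ≤ binSize a (Bi.erase j) := binSize_mono hsub
      _ < b := (hπ.2 Bi hBi hBicov).2 j (hEBi hj)
  -- Bi \ E is nonempty
  have hBiEne : (Bi \ E).Nonempty := nonempty_of_binSize_pos (a := a) (by omega)
  have hUEne : (U ∪ E).Nonempty := hEne.mono Finset.subset_union_right
  -- U ∪ E and Bi \ E are not parts of π
  have hUEnotin : U ∪ E ∉ π.parts := by
    intro h
    by_cases he : U ∪ E = Bi
    · have hUBi : U ⊆ Bi := he ▸ Finset.subset_union_left
      have hUe : U = ∅ := by simpa using disjoint_self.mp (Finset.disjoint_of_subset_left hUBi hdisjUB.symm)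
      rw [hUe, Finset.empty_union] at he
      obtain ⟨x, hx⟩ := hBiEne
      rw [Finset.mem_sdiff, he] at hx
      exact hx.2 hx.1
    · have hd : Disjoint (U ∪ E) Bi := π.disjoint h hBi he
      obtain ⟨x, hx⟩ := hEne
      exact (Finset.disjoint_left.mp hd (Finset.mem_union_right _ hx)) (hEBi hx)
  -- disjointness of the two new bins
  have hdnew : Disjoint (Bi \ E) (U ∪ E) := by
    rw [Finset.disjoint_union_right]
    exact ⟨Finset.disjoint_of_subset_left (Finset.sdiff_subset) hdisjUB.symm,
      Finset.sdiff_disjoint⟩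
  have hBiEneqUE : Bi \ E ≠ U ∪ E := by
    intro h
    obtain ⟨x, hx⟩ := hBiEne
    exact Finset.disjoint_left.mp hdnew hx (h ▸ hx)
  -- the rest of the parts
  set R := (π.parts.erase Bi).erase U with hRdef
  have hRsub : R ⊆ π.parts := (Finset.erase_subset _ _).trans (Finset.erase_subset _ _)
  have hRmem : ∀ B ∈ R, B ∈ π.parts ∧ B ≠ Bi ∧ B ≠ U := by
    intro B hB
    rw [hRdef, Finset.mem_erase, Finset.mem_erase] at hB
    exact ⟨hB.2.2, hB.2.1, hB.1⟩
  have hdBiER : ∀ B ∈ R, Disjoint (Bi \ E) B := by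
    intro B hB
    obtain ⟨hB1, hB2, -⟩ := hRmem B hB
    exact Finset.disjoint_of_subset_left Finset.sdiff_subset
      (π.disjoint hBi hB1 (fun h => hB2 h.symm))
  have hdUER : ∀ B ∈ R, Disjoint (U ∪ E) B := by
    intro B hB
    obtain ⟨hB1, hB2, hB3⟩ := hRmem B hB
    rw [Finset.disjoint_union_left]
    constructor
    · rcases uncovered_mem_or_empty (a := a) (b := b) hπ.1 with h | h
      · rw [hUdef, h]; exact Finset.disjoint_empty_left _
      · exact π.disjoint h hB1 (fun he => hB3 he.symm)
    · exact Finset.disjoint_of_subset_left hEBi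
        (π.disjoint hBi hB1 (fun h => hB2 h.symm))
  -- the new collection of parts
  set P : Finset (Finset (Fin n)) := insert (Bi \ E) (insert (U ∪ E) R) with hPdef
  have hmemP : ∀ B, B ∈ P ↔ B = Bi \ E ∨ B = U ∪ E ∨ B ∈ R := by
    intro B; simp [hPdef]
  -- build the partition
  have hsup : P.sup id = (univ : Finset (Fin n)) := by
    ext x
    simp only [Finset.mem_sup, id, Finset.mem_univ, iff_true]
    have hx : x ∈ π.parts.sup id := by rw [π.sup_parts]; exact Finset.mem_univ x
    rw [Finset.mem_sup] at hx
    obtain ⟨B, hB, hxB⟩ := hx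
    by_cases h1 : B = Bi
    · by_cases h2 : x ∈ E
      · exact ⟨U ∪ E, (hmemP _).mpr (Or.inr (Or.inl rfl)), Finset.mem_union_right _ h2⟩
      · exact ⟨Bi \ E, (hmemP _).mpr (Or.inl rfl), Finset.mem_sdiff.mpr ⟨h1 ▸ hxB, h2⟩⟩
    · by_cases h2 : B = U
      · exact ⟨U ∪ E, (hmemP _).mpr (Or.inr (Or.inl rfl)), Finset.mem_union_left _ (h2 ▸ hxB)⟩
      · exact ⟨B, (hmemP _).mpr (Or.inr (Or.inr (by
          rw [hRdef, Finset.mem_erase, Finset.mem_erase]; exact ⟨h2, h1, hB⟩))), hxB⟩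
  have hpd : (↑P : Set (Finset (Fin n))).PairwiseDisjoint id := by
    intro x hx y hy hxy
    rw [Finset.mem_coe] at hx hy
    rw [hmemP] at hx hy
    have hRpd : ∀ u ∈ R, ∀ v ∈ R, u ≠ v → Disjoint u v := by
      intro u hu v hv huv
      exact π.disjoint (hRmem u hu).1 (hRmem v hv).1 huv
    rcases hx with hx | hx | hx <;> rcases hy with hy | hy | hy <;>
      subst_vars <;>
      first
        | exact absurd rfl hxy
        | exact hdnew
        | exact hdnew.symm
        | exact hdBiER _ hy
        | exact (hdBiER _ hx).symm
        | exact hdUER _ hy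
        | exact (hdUER _ hx).symm
        | exact hRpd _ hx _ hy hxy
  have hnotbot : ⊥ ∉ P := by
    intro h
    rw [hmemP] at h
    rcases h with h | h | h
    · exact hBiEne.ne_empty h.symm
    · exact hUEne.ne_empty h.symm
    · exact π.bot_notMem (hRsub h)
  -- compute the two filters on the new parts
  have hBifil : Bi ∈ π.parts.filter fun B => b ≤ binSize a B :=
    Finset.mem_filter.mpr ⟨hBi, hBicov⟩
  have hfco : P.filter (fun B => b ≤ binSize a B)
      = insert (U ∪ E) ((π.parts.filter fun B => b ≤ binSize a B).erase Bi) := by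
    have hUno : U ∉ (π.parts.filter fun B => b ≤ binSize a B).erase Bi := by
      intro h
      have := (Finset.mem_filter.mp (Finset.mem_of_mem_erase h)).2
      omega
    rw [hPdef, Finset.filter_insert, if_neg (by omega), Finset.filter_insert,
      if_pos hmin.1, hRdef, Finset.filter_erase, Finset.filter_erase,
      Finset.erase_eq_of_notMem hUno]
  have hfun : P.filter (fun B => binSize a B < b) = {Bi \ E} := by
    rw [hPdef, Finset.filter_insert, if_pos hBiE_lt, Finset.filter_insert,
      if_neg (by have := hmin.1; omega)]
    have hRe : R.filter (fun B => binSize a B < b) = ∅ := by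
      rw [Finset.filter_eq_empty_iff]
      intro B hB hBlt
      exact (hRmem B hB).2.2 (by
        rw [hUdef]; exact uncovered_unique hπ.1 (hRmem B hB).1 hBlt)
    rw [hRe]
    rfl
  refine ⟨⟨P, Finset.supIndep_iff_pairwiseDisjoint.mpr hpd, hsup, hnotbot⟩,
    ⟨?_, ?_⟩, ?_, ?_⟩
  · -- Reasonable
    show (P.filter fun B => binSize a B < b).card ≤ 1
    rw [hfun]
    simp
  · -- every covered bin is minimal covered
    intro B hB hBcov
    have hB' : B ∈ P := hB
    rcases (hmemP B).mp hB' with rfl | rfl | hB''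
    · omega
    · exact hmin
    · exact hπ.2 B (hRsub hB'') hBcov
  · -- welfare is unchanged
    show (P.filter fun B => b ≤ binSize a B).card = welfare a b π
    have hUEno : U ∪ E ∉ (π.parts.filter fun B => b ≤ binSize a B).erase Bi := by
      intro h
      exact hUEnotin (Finset.filter_subset _ _ (Finset.mem_of_mem_erase h))
    rw [hfco, Finset.card_insert_of_notMem hUEno, Finset.card_erase_of_mem hBifil]
    have h1 : 1 ≤ (π.parts.filter fun B => b ≤ binSize a B).card :=
      Finset.card_pos.mpr ⟨Bi, hBifil⟩
    unfold welfare
    omega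
  · -- the uncovered bin strictly grows
    show binSize a (uncoveredBin a b π)
      < binSize a ((P.filter fun B => binSize a B < b).sup id)
    rw [hfun, Finset.sup_singleton]
    exact hlt

end AuxStmt16

/-- every rational partition can be turned into an M-SNE without
decreasing the social welfare. -/
theorem stmt16 (n : ℕ) (hn : 1 ≤ n) (a : Fin n → ℕ) (b : ℕ)
    (ha : ∀ j, 0 < a j) (hab : ∀ j, a j < b)
    (π : Finpartition (univ : Finset (Fin n))) (hπ : RationalPartition a b π) :
    ∃ π' : Finpartition (univ : Finset (Fin n)),
      IsMSNE a b π' ∧ welfare a b π ≤ welfare a b π' := by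
  classical
  have hb : 0 < b := lt_trans (ha ⟨0, hn⟩) (hab ⟨0, hn⟩)
  set S := binSize a (univ : Finset (Fin n)) with hS
  suffices H : ∀ m : ℕ, ∀ π₀ : Finpartition (univ : Finset (Fin n)),
      RationalPartition a b π₀ → S - binSize a (uncoveredBin a b π₀) ≤ m →
      ∃ π', IsMSNE a b π' ∧ welfare a b π₀ ≤ welfare a b π' by
    exact H S π hπ (Nat.sub_le _ _)
  intro m
  induction m with
  | zero =>
    intro π₀ h₀ hm
    by_cases hM : IsMSNE a b π₀
    · exact ⟨π₀, hM, le_refl _⟩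
    · obtain ⟨π'', h1, h2, h3⟩ := msne_step hb π₀ h₀ hM
      have hle : binSize a (uncoveredBin a b π'') ≤ S :=
        binSize_mono (Finset.subset_univ _)
      omega
  | succ m ih =>
    intro π₀ h₀ hm
    by_cases hM : IsMSNE a b π₀
    · exact ⟨π₀, hM, le_refl _⟩
    · obtain ⟨π'', h1, h2, h3⟩ := msne_step hb π₀ h₀ hM
      have hle : binSize a (uncoveredBin a b π'') ≤ S :=
        binSize_mono (Finset.subset_univ _)
      obtain ⟨π', hM', hw⟩ := ih π'' h1 (by omega)
      exact ⟨π', hM', by omega⟩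
end

section
/- Every instance of selfish bin covering admits an M-SNE partition π with p(π) = OPT; that is, the price of stability with respect to M-SNE is 1. -/
open Finset

namespace SBC

variable {β : Type*} [DecidableEq β] {s : Finset β}

lemma disj_sdiff_sup {π : Finpartition s} {P : Finset (Finset β)} (hP : P ⊆ π.parts)
    {x : Finset β} (hx : x ∈ π.parts \ P) : Disjoint x (P.sup id) := by
  rw [Finset.disjoint_sup_right]
  intro p hp
  refine π.disjoint (mem_sdiff.1 hx).1 (hP hp) ?_
  rintro rfl; exact (mem_sdiff.1 hx).2 hp

/-- Replace the parts in `P` by the sets in `Q` (same union, disjoint, nonempty). -/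
def replaceParts (π : Finpartition s) (P Q : Finset (Finset β)) (hP : P ⊆ π.parts)
    (hsup : Q.sup id = P.sup id)
    (hQd : (Q : Set (Finset β)).PairwiseDisjoint id)
    (hbot : ⊥ ∉ Q) : Finpartition s where
  parts := (π.parts \ P) ∪ Q
  supIndep := by
    rw [Finset.supIndep_iff_pairwiseDisjoint]
    intro x hx y hy hxy
    rw [coe_union, Set.mem_union, mem_coe, mem_coe] at hx hy
    rcases hx with hx | hx <;> rcases hy with hy | hy
    · exact π.disjoint (mem_coe.2 (mem_sdiff.1 hx).1) (mem_coe.2 (mem_sdiff.1 hy).1) hxy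
    · exact (disj_sdiff_sup hP hx).mono_right ((Finset.le_sup (f := id) hy).trans hsup.le)
    · exact ((disj_sdiff_sup hP hy).mono_right ((Finset.le_sup (f := id) hx).trans hsup.le)).symm
    · exact hQd (mem_coe.2 hx) (mem_coe.2 hy) hxy
  sup_parts := by
    rw [Finset.sup_union, hsup, ← Finset.sup_union, Finset.sdiff_union_self_eq_union,
      Finset.union_eq_left.2 hP, π.sup_parts]
  bot_notMem := by
    rw [Finset.mem_union]
    rintro (h | h)
    · exact π.bot_notMem (mem_sdiff.1 h).1
    · exact hbot h

lemma sdiff_disj_Q {π : Finpartition s} {P Q : Finset (Finset β)} (hP : P ⊆ π.parts)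
    (hsup : Q.sup id = P.sup id) (hbot : ⊥ ∉ Q) : Disjoint (π.parts \ P) Q := by
  rw [Finset.disjoint_right]
  intro q hqQ hqP
  have h1 : q ≤ P.sup id := (Finset.le_sup (f := id) hqQ).trans hsup.le
  exact hbot (((disj_sdiff_sup hP hqP).eq_bot_of_le h1) ▸ hqQ)

lemma replace_card_filter (π : Finpartition s) (P Q : Finset (Finset β)) (hP : P ⊆ π.parts)
    (hsup : Q.sup id = P.sup id) (hQd : (Q : Set (Finset β)).PairwiseDisjoint id)
    (hbot : ⊥ ∉ Q) (p : Finset β → Prop) [DecidablePred p] :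
    ((replaceParts π P Q hP hsup hQd hbot).parts.filter p).card + (P.filter p).card
      = (π.parts.filter p).card + (Q.filter p).card := by
  have h1 : Disjoint (π.parts \ P) Q := sdiff_disj_Q hP hsup hbot
  have h2 : π.parts = (π.parts \ P) ∪ P := by
    rw [Finset.sdiff_union_self_eq_union, Finset.union_eq_left.2 hP]
  have hp : (replaceParts π P Q hP hsup hQd hbot).parts = (π.parts \ P) ∪ Q := rfl
  rw [hp, filter_union, card_union_of_disjoint (disjoint_filter_filter h1)]
  conv_rhs => rw [h2, filter_union, card_union_of_disjoint (disjoint_filter_filter sdiff_disjoint)]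
  omega

lemma replace_sum_filter (π : Finpartition s) (P Q : Finset (Finset β)) (hP : P ⊆ π.parts)
    (hsup : Q.sup id = P.sup id) (hQd : (Q : Set (Finset β)).PairwiseDisjoint id)
    (hbot : ⊥ ∉ Q) (p : Finset β → Prop) [DecidablePred p] (f : Finset β → ℕ) :
    (∑ B ∈ (replaceParts π P Q hP hsup hQd hbot).parts.filter p, f B) + ∑ B ∈ P.filter p, f B
      = (∑ B ∈ π.parts.filter p, f B) + ∑ B ∈ Q.filter p, f B := by
  have h1 : Disjoint (π.parts \ P) Q := sdiff_disj_Q hP hsup hbot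
  have h2 : π.parts = (π.parts \ P) ∪ P := by
    rw [Finset.sdiff_union_self_eq_union, Finset.union_eq_left.2 hP]
  have hp : (replaceParts π P Q hP hsup hQd hbot).parts = (π.parts \ P) ∪ Q := rfl
  rw [hp, filter_union, sum_union (disjoint_filter_filter h1)]
  conv_rhs => rw [h2, filter_union, sum_union (disjoint_filter_filter sdiff_disjoint)]
  omega

lemma replace_card (π : Finpartition s) (P Q : Finset (Finset β)) (hP : P ⊆ π.parts)
    (hsup : Q.sup id = P.sup id) (hQd : (Q : Set (Finset β)).PairwiseDisjoint id)
    (hbot : ⊥ ∉ Q) :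
    (replaceParts π P Q hP hsup hQd hbot).parts.card + P.card = π.parts.card + Q.card := by
  have h1 : Disjoint (π.parts \ P) Q := sdiff_disj_Q hP hsup hbot
  have h2 : π.parts = (π.parts \ P) ∪ P := by
    rw [Finset.sdiff_union_self_eq_union, Finset.union_eq_left.2 hP]
  have hp : (replaceParts π P Q hP hsup hQd hbot).parts = (π.parts \ P) ∪ Q := rfl
  rw [hp, card_union_of_disjoint h1]
  conv_rhs => rw [h2, card_union_of_disjoint sdiff_disjoint]
  omega

lemma pairDisj {X Y : Finset β} (h : Disjoint X Y) :
    (({X, Y} : Finset (Finset β)) : Set (Finset β)).PairwiseDisjoint id := by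
  intro x hx y hy hxy
  simp only [coe_insert, coe_singleton, Set.mem_insert_iff, Set.mem_singleton_iff] at hx hy
  rcases hx with rfl | rfl <;> rcases hy with rfl | rfl
  · exact absurd rfl hxy
  · exact h
  · exact h.symm
  · exact absurd rfl hxy

omit [DecidableEq β] in
lemma singDisj (X : Finset β) :
    (({X} : Finset (Finset β)) : Set (Finset β)).PairwiseDisjoint id := by
  simp

omit [DecidableEq β] in
lemma ne_of_disj {X Y : Finset β} (h : Disjoint X Y) (hX : X.Nonempty) : X ≠ Y := by
  rintro rfl
  exact hX.ne_empty (disjoint_self.1 h)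

instance {γ : Type*} [Fintype γ] [DecidableEq γ] {t : Finset γ} : Finite (Finpartition t) :=
  Finite.of_injective Finpartition.parts fun _ _ h => Finpartition.ext h

def covSum {m : ℕ} (a : Fin m → ℕ) (b : ℕ) (π : Finpartition (univ : Finset (Fin m))) : ℕ :=
  ∑ B ∈ π.parts.filter fun B => b ≤ binSize a B, binSize a B

def msr {m : ℕ} (a : Fin m → ℕ) (b : ℕ) (π : Finpartition (univ : Finset (Fin m))) :
    ℕ ×ₗ (ℕ ×ₗ ℕ) :=
  toLex (welfare a b π, toLex ((∑ j, a j) - covSum a b π, m - π.parts.card))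

lemma sum_parts_binSize {m : ℕ} (a : Fin m → ℕ) (π : Finpartition (univ : Finset (Fin m))) :
    ∑ B ∈ π.parts, binSize a B = ∑ j, a j := by
  unfold binSize
  conv_rhs => rw [← π.biUnion_parts, Finset.sum_biUnion π.disjoint]
  rfl

lemma covSum_le {m : ℕ} (a : Fin m → ℕ) (b : ℕ) (π : Finpartition (univ : Finset (Fin m))) :
    covSum a b π ≤ ∑ j, a j := by
  rw [← sum_parts_binSize a π]
  exact Finset.sum_le_sum_of_subset (filter_subset _ _)

lemma card_parts_le {m : ℕ} (π : Finpartition (univ : Finset (Fin m))) : π.parts.card ≤ m := by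
  simpa using π.card_parts_le_card

lemma msr_lt {m : ℕ} {a : Fin m → ℕ} {b : ℕ} {π σ : Finpartition (univ : Finset (Fin m))}
    (h : welfare a b π < welfare a b σ ∨
      (welfare a b σ = welfare a b π ∧ (covSum a b σ < covSum a b π ∨
        (covSum a b σ = covSum a b π ∧ σ.parts.card < π.parts.card)))) :
    msr a b π < msr a b σ := by
  have h1 := covSum_le a b π
  have h2 := card_parts_le π
  rw [msr, msr, Prod.Lex.lt_iff]
  rcases h with h | ⟨hw, h⟩
  · exact Or.inl h
  · refine Or.inr ⟨hw.symm, ?_⟩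
    rw [Prod.Lex.lt_iff]
    rcases h with h | ⟨hc, h⟩
    · exact Or.inl (by simp only [ofLex_toLex]; omega)
    · exact Or.inr ⟨by simp only [ofLex_toLex]; omega, by simp only [ofLex_toLex]; omega⟩

lemma nonempty_of_binSize_pos {m : ℕ} {a : Fin m → ℕ} {B : Finset (Fin m)}
    (h : 0 < binSize a B) : B.Nonempty := by
  rcases B.eq_empty_or_nonempty with rfl | h'
  · simp [binSize] at h
  · exact h'

end SBC
/-- every instance admits an M-SNE whose welfare equals `OPT`
(price of stability w.r.t. M-SNE is 1). -/
theorem stmt17 (n : ℕ) (hn : 1 ≤ n) (a : Fin n → ℕ) (b : ℕ)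
    (ha : ∀ j, 0 < a j) (hab : ∀ j, a j < b) :
    ∃ π : Finpartition (univ : Finset (Fin n)),
      IsMSNE a b π ∧ ∀ σ : Finpartition (univ : Finset (Fin n)),
        welfare a b σ ≤ welfare a b π := by
  classical
  have hnat : Nonempty (Fin n) := ⟨⟨0, hn⟩⟩
  have hb0 : 0 < b := lt_trans (ha ⟨0, hn⟩) (hab ⟨0, hn⟩)
  have hne_univ : (univ : Finset (Fin n)) ≠ ⊥ := by
    simpa using (Finset.univ_nonempty (α := Fin n)).ne_empty
  have hnp : Nonempty (Finpartition (univ : Finset (Fin n))) :=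
    ⟨Finpartition.indiscrete hne_univ⟩
  obtain ⟨π, hmax⟩ := Finite.exists_max (SBC.msr a b)
  have key : ∀ σ : Finpartition (univ : Finset (Fin n)),
      (welfare a b π < welfare a b σ ∨
        (welfare a b σ = welfare a b π ∧ (SBC.covSum a b σ < SBC.covSum a b π ∨
          (SBC.covSum a b σ = SBC.covSum a b π ∧ σ.parts.card < π.parts.card)))) → False :=
    fun σ h => not_lt_of_ge (hmax σ) (SBC.msr_lt h)
  -- Claim A: π is reasonable
  have hreas : Reasonable a b π := by
    by_contra hbad
    rw [Reasonable, not_le] at hbad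
    obtain ⟨U1, hU1, U2, hU2, hne⟩ := Finset.one_lt_card.1 hbad
    rw [mem_filter] at hU1 hU2
    have hU1c : ¬ b ≤ binSize a U1 := not_le.2 hU1.2
    have hU2c : ¬ b ≤ binSize a U2 := not_le.2 hU2.2
    have hPsub : ({U1, U2} : Finset (Finset (Fin n))) ⊆ π.parts := by
      rw [Finset.insert_subset_iff, Finset.singleton_subset_iff]
      exact ⟨hU1.1, hU2.1⟩
    have hsup : ({U1 ∪ U2} : Finset (Finset (Fin n))).sup id
        = ({U1, U2} : Finset (Finset (Fin n))).sup id := by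
      simp
    have hbot : ⊥ ∉ ({U1 ∪ U2} : Finset (Finset (Fin n))) := by
      rw [Finset.mem_singleton]
      intro h
      exact (π.nonempty_of_mem_parts hU1.1).ne_empty (Finset.union_eq_empty.1 h.symm).1
    obtain ⟨σ', e1, e2, e3⟩ :
        ∃ σ' : Finpartition (univ : Finset (Fin n)),
          (welfare a b σ'
              + (({U1, U2} : Finset (Finset (Fin n))).filter fun B => b ≤ binSize a B).card
            = welfare a b π
              + (({U1 ∪ U2} : Finset (Finset (Fin n))).filter fun B => b ≤ binSize a B).card)
          ∧ (SBC.covSum a b σ'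
              + ∑ B ∈ ({U1, U2} : Finset (Finset (Fin n))).filter fun B => b ≤ binSize a B,
                  binSize a B
            = SBC.covSum a b π
              + ∑ B ∈ ({U1 ∪ U2} : Finset (Finset (Fin n))).filter fun B => b ≤ binSize a B,
                  binSize a B)
          ∧ σ'.parts.card + ({U1, U2} : Finset (Finset (Fin n))).card
            = π.parts.card + ({U1 ∪ U2} : Finset (Finset (Fin n))).card :=
      ⟨SBC.replaceParts π _ _ hPsub hsup (SBC.singDisj _) hbot,
       SBC.replace_card_filter π _ _ hPsub hsup (SBC.singDisj _) hbot _,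
       SBC.replace_sum_filter π _ _ hPsub hsup (SBC.singDisj _) hbot _ _,
       SBC.replace_card π _ _ hPsub hsup (SBC.singDisj _) hbot⟩
    have hPf : ({U1, U2} : Finset (Finset (Fin n))).filter (fun B => b ≤ binSize a B) = ∅ := by
      rw [filter_insert, if_neg hU1c, filter_singleton, if_neg hU2c]
    have hPcard : ({U1, U2} : Finset (Finset (Fin n))).card = 2 := by
      rw [card_insert_of_notMem (Finset.notMem_singleton.2 hne), card_singleton]
    by_cases hc : b ≤ binSize a (U1 ∪ U2)
    · refine key σ' (Or.inl ?_)
      rw [hPf, filter_singleton, if_pos hc, card_empty, card_singleton] at e1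
      omega
    · refine key σ' (Or.inr ⟨?_, Or.inr ⟨?_, ?_⟩⟩)
      · rw [hPf, filter_singleton, if_neg hc, card_empty] at e1; omega
      · rw [hPf, filter_singleton, if_neg hc, Finset.sum_empty] at e2; omega
      · rw [hPcard, card_singleton] at e3; omega
  -- Claim B: every covered part is minimal covered
  have hmin : ∀ B ∈ π.parts, b ≤ binSize a B → MinimalCovered a b B := by
    intro B hB hcov
    refine ⟨hcov, fun j hjB => ?_⟩
    by_contra hjs
    rw [not_lt] at hjs
    have hBe : (B.erase j).Nonempty := SBC.nonempty_of_binSize_pos (lt_of_lt_of_le hb0 hjs)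
    have hPsub : ({B} : Finset (Finset (Fin n))) ⊆ π.parts := Finset.singleton_subset_iff.2 hB
    have hsup : ({B.erase j, {j}} : Finset (Finset (Fin n))).sup id
        = ({B} : Finset (Finset (Fin n))).sup id := by
      simp only [Finset.sup_insert, Finset.sup_singleton, id, Finset.sup_eq_union]
      rw [Finset.union_comm, ← Finset.insert_eq, Finset.insert_erase hjB]
    have hQd : ((({B.erase j, {j}} : Finset (Finset (Fin n)))) :
        Set (Finset (Fin n))).PairwiseDisjoint id :=
      SBC.pairDisj (Finset.disjoint_singleton_right.2 (Finset.notMem_erase j B))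
    have hbot : ⊥ ∉ ({B.erase j, {j}} : Finset (Finset (Fin n))) := by
      rw [Finset.mem_insert, Finset.mem_singleton]
      push_neg
      exact ⟨fun h => hBe.ne_empty h.symm, fun h => (Finset.singleton_nonempty j).ne_empty h.symm⟩
    obtain ⟨σ', e1, e2⟩ :
        ∃ σ' : Finpartition (univ : Finset (Fin n)),
          (welfare a b σ'
              + (({B} : Finset (Finset (Fin n))).filter fun X => b ≤ binSize a X).card
            = welfare a b π
              + (({B.erase j, {j}} : Finset (Finset (Fin n))).filter fun X => b ≤ binSize a X).card)
          ∧ (SBC.covSum a b σ'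
              + ∑ X ∈ ({B} : Finset (Finset (Fin n))).filter fun X => b ≤ binSize a X,
                  binSize a X
            = SBC.covSum a b π
              + ∑ X ∈ ({B.erase j, {j}} : Finset (Finset (Fin n))).filter fun X => b ≤ binSize a X,
                  binSize a X) :=
      ⟨SBC.replaceParts π _ _ hPsub hsup hQd hbot,
       SBC.replace_card_filter π _ _ hPsub hsup hQd hbot _,
       SBC.replace_sum_filter π _ _ hPsub hsup hQd hbot _ _⟩
    have hjcov : ¬ b ≤ binSize a ({j} : Finset (Fin n)) := by
      rw [not_le]
      simpa [binSize] using hab j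
    have hPf : ({B} : Finset (Finset (Fin n))).filter (fun X => b ≤ binSize a X) = {B} := by
      rw [filter_singleton, if_pos hcov]
    have hQf : ({B.erase j, {j}} : Finset (Finset (Fin n))).filter (fun X => b ≤ binSize a X)
        = {B.erase j} := by
      rw [filter_insert, if_pos hjs, filter_singleton, if_neg hjcov]; rfl
    have hsz : binSize a (B.erase j) + a j = binSize a B := Finset.sum_erase_add B a hjB
    have haj := ha j
    refine key σ' (Or.inr ⟨?_, Or.inl ?_⟩)
    · rw [hPf, hQf, card_singleton, card_singleton] at e1; omega
    · rw [hPf, hQf, Finset.sum_singleton, Finset.sum_singleton] at e2; omega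
  -- Claim C: no M-SNE deviation
  have hM : ¬ ∃ (Bi E : Finset (Fin n)), Bi ∈ π.parts ∧ b ≤ binSize a Bi ∧ E ⊆ Bi ∧
      binSize a (uncoveredBin a b π) < binSize a (Bi \ E) ∧
      MinimalCovered a b (uncoveredBin a b π ∪ E) := by
    rintro ⟨Bi, E, hBi, hBicov, hEBi, hlt, hminU⟩
    by_cases hemp : (π.parts.filter fun B => binSize a B < b) = ∅
    · -- no uncovered bin: split Bi into E and Bi \ E
      have hUB : uncoveredBin a b π = ∅ := by
        rw [uncoveredBin, hemp, Finset.sup_empty]; rfl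
      rw [hUB, Finset.empty_union] at hminU
      rw [hUB] at hlt
      have hlt0 : 0 < binSize a (Bi \ E) := by simpa [binSize] using hlt
      have hEcov : b ≤ binSize a E := hminU.1
      have hEne : E.Nonempty := SBC.nonempty_of_binSize_pos (lt_of_lt_of_le hb0 hEcov)
      have hBEne : (Bi \ E).Nonempty := SBC.nonempty_of_binSize_pos hlt0
      have hdisj : Disjoint E (Bi \ E) := Finset.disjoint_sdiff
      have hPsub : ({Bi} : Finset (Finset (Fin n))) ⊆ π.parts := Finset.singleton_subset_iff.2 hBi
      have hsup : ({E, Bi \ E} : Finset (Finset (Fin n))).sup id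
          = ({Bi} : Finset (Finset (Fin n))).sup id := by
        simp only [Finset.sup_insert, Finset.sup_singleton, id, Finset.sup_eq_union]
        exact Finset.union_sdiff_of_subset hEBi
      have hQd : ((({E, Bi \ E} : Finset (Finset (Fin n)))) :
          Set (Finset (Fin n))).PairwiseDisjoint id := SBC.pairDisj hdisj
      have hbot : ⊥ ∉ ({E, Bi \ E} : Finset (Finset (Fin n))) := by
        rw [Finset.mem_insert, Finset.mem_singleton]
        push_neg
        exact ⟨fun h => hEne.ne_empty h.symm, fun h => hBEne.ne_empty h.symm⟩
      obtain ⟨σ', e1, e2⟩ :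
          ∃ σ' : Finpartition (univ : Finset (Fin n)),
            (welfare a b σ'
                + (({Bi} : Finset (Finset (Fin n))).filter fun X => b ≤ binSize a X).card
              = welfare a b π
                + (({E, Bi \ E} : Finset (Finset (Fin n))).filter fun X => b ≤ binSize a X).card)
            ∧ (SBC.covSum a b σ'
                + ∑ X ∈ ({Bi} : Finset (Finset (Fin n))).filter fun X => b ≤ binSize a X,
                    binSize a X
              = SBC.covSum a b π
                + ∑ X ∈ ({E, Bi \ E} : Finset (Finset (Fin n))).filter fun X => b ≤ binSize a X,
                    binSize a X) :=
        ⟨SBC.replaceParts π _ _ hPsub hsup hQd hbot,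
         SBC.replace_card_filter π _ _ hPsub hsup hQd hbot _,
         SBC.replace_sum_filter π _ _ hPsub hsup hQd hbot _ _⟩
      have hPf : ({Bi} : Finset (Finset (Fin n))).filter (fun X => b ≤ binSize a X) = {Bi} := by
        rw [filter_singleton, if_pos hBicov]
      have hQne : E ≠ Bi \ E := SBC.ne_of_disj hdisj hEne
      have hsz : binSize a E + binSize a (Bi \ E) = binSize a Bi := by
        rw [binSize, binSize, binSize, ← Finset.sum_union hdisj,
          Finset.union_sdiff_of_subset hEBi]
      by_cases hc : b ≤ binSize a (Bi \ E)
      · refine key σ' (Or.inl ?_)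
        have hQf : ({E, Bi \ E} : Finset (Finset (Fin n))).filter (fun X => b ≤ binSize a X)
            = {E, Bi \ E} := by
          rw [filter_insert, if_pos hEcov, filter_singleton, if_pos hc]
        rw [hPf, hQf, card_singleton,
          card_insert_of_notMem (Finset.notMem_singleton.2 hQne), card_singleton] at e1
        omega
      · have hQf : ({E, Bi \ E} : Finset (Finset (Fin n))).filter (fun X => b ≤ binSize a X)
            = {E} := by
          rw [filter_insert, if_pos hEcov, filter_singleton, if_neg hc]; rfl
        refine key σ' (Or.inr ⟨?_, Or.inl ?_⟩)
        · rw [hPf, hQf, card_singleton, card_singleton] at e1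
          omega
        · rw [hPf, hQf, Finset.sum_singleton, Finset.sum_singleton] at e2
          omega
    · -- there is a (unique) uncovered bin U0
      have hcard1 : (π.parts.filter fun B => binSize a B < b).card = 1 :=
        le_antisymm hreas (Finset.card_pos.2 (Finset.nonempty_of_ne_empty hemp))
      obtain ⟨U0, hU0eq⟩ := Finset.card_eq_one.1 hcard1
      have hU0mem : U0 ∈ π.parts.filter fun B => binSize a B < b :=
        hU0eq ▸ Finset.mem_singleton_self U0
      rw [mem_filter] at hU0mem
      have hUB : uncoveredBin a b π = U0 := by
        rw [uncoveredBin, hU0eq, Finset.sup_singleton]; rfl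
      rw [hUB] at hlt hminU
      have hBiU0 : Bi ≠ U0 := fun h => absurd (h ▸ hBicov) (not_le.2 hU0mem.2)
      have hdU0Bi : Disjoint U0 Bi :=
        π.disjoint (mem_coe.2 hU0mem.1) (mem_coe.2 hBi) (Ne.symm hBiU0)
      have hUEcov : b ≤ binSize a (U0 ∪ E) := hminU.1
      have hUEne : (U0 ∪ E).Nonempty := SBC.nonempty_of_binSize_pos (lt_of_lt_of_le hb0 hUEcov)
      have hBEne : (Bi \ E).Nonempty :=
        SBC.nonempty_of_binSize_pos (Nat.lt_of_le_of_lt (Nat.zero_le _) hlt)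
      have hPsub : ({Bi, U0} : Finset (Finset (Fin n))) ⊆ π.parts := by
        rw [Finset.insert_subset_iff, Finset.singleton_subset_iff]
        exact ⟨hBi, hU0mem.1⟩
      have hQdisj : Disjoint (U0 ∪ E) (Bi \ E) :=
        Finset.disjoint_union_left.2
          ⟨hdU0Bi.mono_right (Finset.sdiff_subset), Finset.disjoint_sdiff⟩
      have hsup : ({U0 ∪ E, Bi \ E} : Finset (Finset (Fin n))).sup id
          = ({Bi, U0} : Finset (Finset (Fin n))).sup id := by
        simp only [Finset.sup_insert, Finset.sup_singleton, id, Finset.sup_eq_union]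
        rw [Finset.union_assoc, Finset.union_sdiff_of_subset hEBi, Finset.union_comm]
      have hQd : ((({U0 ∪ E, Bi \ E} : Finset (Finset (Fin n)))) :
          Set (Finset (Fin n))).PairwiseDisjoint id := SBC.pairDisj hQdisj
      have hbot : ⊥ ∉ ({U0 ∪ E, Bi \ E} : Finset (Finset (Fin n))) := by
        rw [Finset.mem_insert, Finset.mem_singleton]
        push_neg
        exact ⟨fun h => hUEne.ne_empty h.symm, fun h => hBEne.ne_empty h.symm⟩
      obtain ⟨σ', e1, e2⟩ :
          ∃ σ' : Finpartition (univ : Finset (Fin n)),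
            (welfare a b σ'
                + (({Bi, U0} : Finset (Finset (Fin n))).filter fun X => b ≤ binSize a X).card
              = welfare a b π
                + (({U0 ∪ E, Bi \ E} : Finset (Finset (Fin n))).filter
                    fun X => b ≤ binSize a X).card)
            ∧ (SBC.covSum a b σ'
                + ∑ X ∈ ({Bi, U0} : Finset (Finset (Fin n))).filter fun X => b ≤ binSize a X,
                    binSize a X
              = SBC.covSum a b π
                + ∑ X ∈ ({U0 ∪ E, Bi \ E} : Finset (Finset (Fin n))).filter
                    fun X => b ≤ binSize a X, binSize a X) :=
        ⟨SBC.replaceParts π _ _ hPsub hsup hQd hbot,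
         SBC.replace_card_filter π _ _ hPsub hsup hQd hbot _,
         SBC.replace_sum_filter π _ _ hPsub hsup hQd hbot _ _⟩
      have hPf : ({Bi, U0} : Finset (Finset (Fin n))).filter (fun X => b ≤ binSize a X)
          = {Bi} := by
        rw [filter_insert, if_pos hBicov, filter_singleton, if_neg (not_le.2 hU0mem.2)]; rfl
      have hQne : U0 ∪ E ≠ Bi \ E := SBC.ne_of_disj hQdisj hUEne
      have hszBi : binSize a E + binSize a (Bi \ E) = binSize a Bi := by
        rw [binSize, binSize, binSize, ← Finset.sum_union Finset.disjoint_sdiff,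
          Finset.union_sdiff_of_subset hEBi]
      have hszUE : binSize a (U0 ∪ E) = binSize a U0 + binSize a E := by
        rw [binSize, binSize, binSize, ← Finset.sum_union (hdU0Bi.mono_right hEBi)]
      by_cases hc : b ≤ binSize a (Bi \ E)
      · refine key σ' (Or.inl ?_)
        have hQf : ({U0 ∪ E, Bi \ E} : Finset (Finset (Fin n))).filter
            (fun X => b ≤ binSize a X) = {U0 ∪ E, Bi \ E} := by
          rw [filter_insert, if_pos hUEcov, filter_singleton, if_pos hc]
        rw [hPf, hQf, card_singleton,
          card_insert_of_notMem (Finset.notMem_singleton.2 hQne), card_singleton] at e1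
        omega
      · have hQf : ({U0 ∪ E, Bi \ E} : Finset (Finset (Fin n))).filter
            (fun X => b ≤ binSize a X) = {U0 ∪ E} := by
          rw [filter_insert, if_pos hUEcov, filter_singleton, if_neg hc]; rfl
        refine key σ' (Or.inr ⟨?_, Or.inl ?_⟩)
        · rw [hPf, hQf, card_singleton, card_singleton] at e1
          omega
        · rw [hPf, hQf, Finset.sum_singleton, Finset.sum_singleton] at e2
          omega
  refine ⟨π, ⟨⟨hreas, hmin⟩, hM⟩, fun σ => ?_⟩
  have h := hmax σ
  rw [SBC.msr, SBC.msr, Prod.Lex.le_iff] at h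
  rcases h with h | ⟨h, _⟩
  · exact le_of_lt h
  · exact le_of_eq h
end

section
/- For every reasonable partition π of an instance of selfish bin covering that is a strong Nash equilibrium (SNE), OPT ≤ 2·p(π); that is, the price of anarchy with respect to SNE is at least 1/2. -/
open Finset

lemma sum_parts_binSize {n : ℕ} (a : Fin n → ℕ)
    (π : Finpartition (univ : Finset (Fin n))) :
    ∑ B ∈ π.parts, binSize a B = ∑ j : Fin n, a j := by
  have h : ∑ j ∈ π.parts.biUnion id, a j = ∑ B ∈ π.parts, ∑ j ∈ B, a j :=
    Finset.sum_biUnion (fun x hx y hy hxy => π.disjoint hx hy hxy)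
  rw [π.biUnion_parts] at h
  exact h.symm

/-- for every reasonable SNE `π`, `OPT ≤ 2 p(π)`. -/
theorem stmt19 (n : ℕ) (hn : 1 ≤ n) (a : Fin n → ℕ) (b : ℕ)
    (ha : ∀ j, 0 < a j) (hab : ∀ j, a j < b)
    (π : Finpartition (univ : Finset (Fin n)))
    (hres : Reasonable a b π) (hsne : IsSNE a b π)
    (σ : Finpartition (univ : Finset (Fin n))) :
    welfare a b σ ≤ 2 * welfare a b π := by
  have hb : 2 ≤ b := lt_of_le_of_lt (ha ⟨0, hn⟩) (hab ⟨0, hn⟩)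
  -- every covered bin of π has size < 2b
  have hcov : ∀ B ∈ π.parts, b ≤ binSize a B → binSize a B < 2 * b := by
    intro B hB hbB
    by_contra h
    push_neg at h
    -- find minimal covered subset
    obtain ⟨B', hB'mem, hB'min⟩ := Finset.exists_min_image
      ((B.powerset).filter fun C => b ≤ binSize a C) (binSize a)
      ⟨B, by simp [hbB]⟩
    simp only [mem_filter, mem_powerset] at hB'mem
    obtain ⟨hB'sub, hB'cov⟩ := hB'mem
    have hB'ne : B'.Nonempty := by
      rcases B'.eq_empty_or_nonempty with rfl | h'
      · simp [binSize] at hB'cov; omega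
      · exact h'
    obtain ⟨j, hj⟩ := hB'ne
    have herase : binSize a (B'.erase j) < b := by
      by_contra h'
      push_neg at h'
      have := hB'min (B'.erase j) (by
        simp only [mem_filter, mem_powerset]
        exact ⟨(erase_subset _ _).trans hB'sub, h'⟩)
      have : binSize a B' = binSize a (B'.erase j) + a j := by
        unfold binSize
        rw [← Finset.sum_erase_add _ _ hj]
      have := ha j
      omega
    have hsz : binSize a B' = binSize a (B'.erase j) + a j := by
      unfold binSize
      rw [← Finset.sum_erase_add _ _ hj]
    have hlt : binSize a B' < 2 * b := by
      have := hab j; omega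
    exact hsne ⟨B', hB'cov, fun k hk => Or.inr (by
      rw [π.part_eq_of_mem hB (hB'sub hk)]; omega)⟩
  -- lower bound for σ
  have hlow : welfare a b σ * b ≤ ∑ j : Fin n, a j := by
    rw [← sum_parts_binSize a σ]
    calc welfare a b σ * b
        ≤ ∑ B ∈ σ.parts.filter (fun B => b ≤ binSize a B), binSize a B := by
          rw [welfare]
          exact Finset.card_nsmul_le_sum _ _ _ (fun B hB => (mem_filter.mp hB).2)
      _ ≤ ∑ B ∈ σ.parts, binSize a B :=
          Finset.sum_le_sum_of_subset (filter_subset _ _)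
  -- upper bound for π
  have hup : ∑ j : Fin n, a j ≤ welfare a b π * (2 * b - 1) + (b - 1) := by
    rw [← sum_parts_binSize a π]
    have hres' : (π.parts.filter fun B => ¬ b ≤ binSize a B).card ≤ 1 := by
      have : (π.parts.filter fun B => ¬ b ≤ binSize a B)
          = (π.parts.filter fun B => binSize a B < b) := by
        apply Finset.filter_congr; intro B _; simp [Nat.not_le]
      rw [this]; exact hres
    rw [← Finset.sum_filter_add_sum_filter_not π.parts (fun B => b ≤ binSize a B)]
    refine Nat.add_le_add ?_ ?_
    · calc ∑ B ∈ π.parts.filter (fun B => b ≤ binSize a B), binSize a B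
            ≤ ∑ B ∈ π.parts.filter (fun B => b ≤ binSize a B), (2*b - 1) := by
              apply Finset.sum_le_sum
              intro B hB
              simp only [mem_filter] at hB
              have := hcov B hB.1 hB.2
              omega
          _ = welfare a b π * (2*b-1) := by rw [Finset.sum_const, welfare, smul_eq_mul]
    · calc ∑ B ∈ π.parts.filter (fun B => ¬ b ≤ binSize a B), binSize a B
            ≤ ∑ B ∈ π.parts.filter (fun B => ¬ b ≤ binSize a B), (b-1) := by
              apply Finset.sum_le_sum
              intro B hB
              simp only [mem_filter] at hB
              omega
          _ ≤ 1 * (b-1) := by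
              rw [Finset.sum_const, smul_eq_mul]
              exact Nat.mul_le_mul_right _ hres'
          _ = b - 1 := one_mul _
  -- combine
  set p := welfare a b π
  set q := welfare a b σ
  by_contra hq
  push_neg at hq
  have : q * b ≤ p * (2*b-1) + (b-1) := le_trans hlow hup
  zify [show 1 ≤ 2*b by omega, show 1 ≤ b by omega] at this
  have hq' : (2*p+1 : ℤ) ≤ q := by exact_mod_cast hq
  have hb' : (2 : ℤ) ≤ b := by exact_mod_cast hb
  nlinarith [this, hq', hb']
end
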